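/- Let α₂(t) = 1 − e^{2πit}, t ∈ [0,1], be the loop in ℂ \ {−1,1} based at 0 that surrounds 1 counterclockwise. For every k ∈ ℤ, the unique lift γ of α₂ under the covering map f = f₁ ∘ f₂ with initial point γ(0) = −i/2 + ik satisfies: γ(1) = −i/2 + i(k−1), the image of γ is contained in the closed right half-plane {z : Re z ≥ 0}, and Re γ(t) = 0 only for t = 0 and t = 1. -/

import Mathlib

open Complex unitInterval

/-- The set `iℤ = {i·m : m ∈ ℤ}` of integer multiples of `i`. -/
def intMulI : Set ℂ := {z : ℂ | ∃ m : ℤ, z = Complex.I * (m : ℂ)}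

/-- `f₂(z) = (e^{πz} − 1)/(e^{πz} + 1)`. -/
noncomputable def fTwo (z : ℂ) : ℂ :=
  (Complex.exp (Real.pi * z) - 1) / (Complex.exp (Real.pi * z) + 1)

/-- `f₁(w) = (1/2)(w + 1/w)`. -/
noncomputable def fOne (w : ℂ) : ℂ := (w + w⁻¹) / 2

/-- The covering map `f = f₁ ∘ f₂` from `ℂ \ iℤ` onto `ℂ \ {−1,1}`. -/
noncomputable def fCov (z : ℂ) : ℂ := fOne (fTwo z)

/-- The loop `α₂(t) = 1 − e^{2πit}` in `ℂ \ {−1,1}` based at `0`,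
surrounding `1` counterclockwise. -/
noncomputable def alphaTwo (t : ℝ) : ℂ := 1 - Complex.exp (2 * Real.pi * Complex.I * t)

/-! ### Auxiliary lemmas -/

/-- The explicit lift: `γ(t) = i((2k−1)/2 − t) + (2π)⁻¹ log(2 − e^{2πit})`. -/
noncomputable def gam (k : ℤ) (t : ℝ) : ℂ :=
  Complex.I * (((2*k-1)/2 - t : ℝ) : ℂ) +
    (((2*Real.pi)⁻¹ : ℝ) : ℂ) * Complex.log (2 - Complex.exp (2 * Real.pi * Complex.I * t))

lemma abs_e (t : ℝ) : ‖Complex.exp (2 * Real.pi * Complex.I * t)‖ = 1 := by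
  rw [Complex.norm_exp]
  norm_num [Complex.mul_re, Complex.mul_im]

lemma re_pos (t : ℝ) : 0 < (2 - Complex.exp (2 * Real.pi * Complex.I * t)).re := by
  have h := Complex.re_le_norm (Complex.exp (2 * Real.pi * Complex.I * t))
  rw [abs_e] at h
  simp only [Complex.sub_re]
  norm_num
  linarith

lemma two_sub_ne (t : ℝ) : (2 : ℂ) - Complex.exp (2 * Real.pi * Complex.I * t) ≠ 0 := by
  intro h
  have := re_pos t
  rw [h] at this
  simp at this

lemma one_le_abs (t : ℝ) : 1 ≤ ‖2 - Complex.exp (2 * Real.pi * Complex.I * t)‖ := by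
  have h := norm_sub_norm_le (2 : ℂ) (Complex.exp (2 * Real.pi * Complex.I * t))
  rw [abs_e] at h
  have h2 : ‖(2:ℂ)‖ = 2 := by norm_num
  linarith

lemma abs_eq_one_imp (t : ℝ) (ht : t ∈ Set.Icc (0:ℝ) 1)
    (h : ‖2 - Complex.exp (2 * Real.pi * Complex.I * t)‖ = 1) :
    t = 0 ∨ t = 1 := by
  set E := Complex.exp (2 * Real.pi * Complex.I * t) with hE
  have habs : ‖E‖ = 1 := abs_e t
  have hn1 : Complex.normSq E = 1 := by
    rw [← Complex.sq_norm, habs]; norm_num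
  have hn2 : Complex.normSq (2 - E) = 1 := by
    rw [← Complex.sq_norm, h]; norm_num
  have hre : E.re = 1 := by
    have h2re : ((2:ℂ)).re = 2 := by norm_num
    have h2im : ((2:ℂ)).im = 0 := by norm_num
    simp only [Complex.normSq_apply, Complex.sub_re, Complex.sub_im, h2re, h2im] at hn1 hn2
    nlinarith
  have harg : (2 : ℂ) * Real.pi * Complex.I * t = ((2 * Real.pi * t : ℝ) : ℂ) * Complex.I := by
    push_cast; ring
  have hcos : Real.cos (2 * Real.pi * t) = 1 := by
    have : E.re = Real.cos (2 * Real.pi * t) := by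
      rw [hE, harg, Complex.exp_ofReal_mul_I_re]
    rw [← this, hre]
  rw [Real.cos_eq_one_iff] at hcos
  obtain ⟨n, hn⟩ := hcos
  have hpi : (0:ℝ) < Real.pi := Real.pi_pos
  have htn : t = n := by
    have : (n:ℝ) * (2 * Real.pi) = 2 * Real.pi * t := hn
    nlinarith
  obtain ⟨ht0, ht1⟩ := ht
  have hn0 : (0:ℝ) ≤ n := by rw [← htn]; exact ht0
  have hn1' : (n:ℝ) ≤ 1 := by rw [← htn]; exact ht1
  have : n = 0 ∨ n = 1 := by
    have h0 : (0:ℤ) ≤ n := by exact_mod_cast hn0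
    have h1 : n ≤ (1:ℤ) := by exact_mod_cast hn1'
    omega
  rcases this with h | h
  · left; rw [htn, h]; norm_num
  · right; rw [htn, h]; norm_num

lemma gam_re (k : ℤ) (t : ℝ) : (gam k t).re =
    (2*Real.pi)⁻¹ * Real.log ‖2 - Complex.exp (2 * Real.pi * Complex.I * t)‖ := by
  simp [gam, Complex.add_re, Complex.mul_re, Complex.I_re, Complex.I_im,
    Complex.ofReal_re, Complex.ofReal_im, Complex.log_re]

lemma gam_re_nonneg (k : ℤ) (t : ℝ) : 0 ≤ (gam k t).re := by
  rw [gam_re]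
  apply mul_nonneg
  · positivity
  · exact Real.log_nonneg (one_le_abs t)

lemma gam_re_eq_zero (k : ℤ) (t : ℝ) (ht : t ∈ Set.Icc (0:ℝ) 1)
    (h : (gam k t).re = 0) : t = 0 ∨ t = 1 := by
  rw [gam_re] at h
  have hpi : (0:ℝ) < (2*Real.pi)⁻¹ := by positivity
  have hlog : Real.log ‖2 - Complex.exp (2 * Real.pi * Complex.I * t)‖ = 0 := by
    rcases mul_eq_zero.mp h with h' | h'
    · linarith
    · exact h'
  have habs := one_le_abs t
  rw [Real.log_eq_zero] at hlog
  rcases hlog with h' | h' | h' <;> [linarith; exact abs_eq_one_imp t ht h'; linarith]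

lemma gam_cont (k : ℤ) : Continuous (gam k) := by
  unfold gam
  apply Continuous.add
  · fun_prop
  · apply Continuous.mul continuous_const
    rw [continuous_iff_continuousAt]
    intro t
    apply ContinuousAt.clog
    · fun_prop
    · exact Or.inl (re_pos t)

lemma gam_zero (k : ℤ) : gam k 0 = -Complex.I/2 + Complex.I * (k : ℂ) := by
  have h1 : (2 : ℂ) - Complex.exp (2 * Real.pi * Complex.I * (0:ℝ)) = 1 := by
    norm_num
  rw [gam, h1, Complex.log_one]
  push_cast
  ring

lemma gam_one (k : ℤ) : gam k 1 = -Complex.I/2 + Complex.I * ((k : ℂ) - 1) := by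
  have h : (2 : ℂ) * Real.pi * Complex.I * (1:ℝ) = 2 * Real.pi * Complex.I := by
    push_cast; ring
  have h1 : (2 : ℂ) - Complex.exp (2 * Real.pi * Complex.I * (1:ℝ)) = 1 := by
    rw [h, Complex.exp_two_pi_mul_I]; norm_num
  rw [gam, h1, Complex.log_one]
  push_cast
  ring

lemma exp_gam (k : ℤ) (t : ℝ) :
    Complex.exp (2 * Real.pi * gam k t) =
      1 - 2 * (Complex.exp (2 * Real.pi * Complex.I * t))⁻¹ := by
  have hpi : (Real.pi : ℂ) ≠ 0 := by exact_mod_cast Real.pi_ne_zero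
  have harg : (2 * Real.pi : ℂ) * gam k t =
      (k : ℂ) * (2 * Real.pi * Complex.I) + (-(Real.pi * Complex.I)) +
        (-(2 * Real.pi * Complex.I * t)) +
        Complex.log (2 - Complex.exp (2 * Real.pi * Complex.I * t)) := by
    unfold gam
    push_cast
    field_simp
    ring
  rw [harg, Complex.exp_add, Complex.exp_add, Complex.exp_add,
    Complex.exp_int_mul_two_pi_mul_I, Complex.exp_neg, Complex.exp_neg,
    Complex.exp_pi_mul_I, Complex.exp_log (two_sub_ne t)]
  have hE : Complex.exp (2 * Real.pi * Complex.I * t) ≠ 0 := Complex.exp_ne_zero _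
  field_simp
  ring

lemma fCov_eq (z : ℂ) (h : Complex.exp (2 * Real.pi * z) ≠ 1) :
    fCov z = (Complex.exp (2 * Real.pi * z) + 1) / (Complex.exp (2 * Real.pi * z) - 1) := by
  have hsq : Complex.exp (2 * Real.pi * z) = Complex.exp (Real.pi * z) ^ 2 := by
    rw [sq, ← Complex.exp_add]; ring_nf
  set E := Complex.exp (Real.pi * z) with hE
  have hE0 : E ≠ 0 := Complex.exp_ne_zero _
  have hE1 : E - 1 ≠ 0 := by
    intro hc
    apply h
    rw [hsq, sub_eq_zero.mp hc]; norm_num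
  have hE2 : E + 1 ≠ 0 := by
    intro hc
    apply h
    have : E = -1 := by linear_combination hc
    rw [hsq, this]; norm_num
  have hsq1 : E ^ 2 - 1 ≠ 0 := by
    intro hc
    apply h
    rw [hsq]; linear_combination hc
  unfold fCov fOne fTwo
  rw [hsq, ← hE]
  field_simp
  ring

lemma exp_ne_one_of_not_mem (z : ℂ) (hz : z ∉ intMulI) :
    Complex.exp (2 * Real.pi * z) ≠ 1 := by
  intro h
  rw [Complex.exp_eq_one_iff] at h
  obtain ⟨n, hn⟩ := h
  apply hz
  refine ⟨n, ?_⟩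
  have hpi : (Real.pi : ℂ) ≠ 0 := by exact_mod_cast Real.pi_ne_zero
  have h2 : (2 * (Real.pi : ℂ)) ≠ 0 := by simp [hpi]
  have key : (2 * (Real.pi : ℂ)) * z = (2 * (Real.pi : ℂ)) * (Complex.I * n) := by
    linear_combination hn
  exact mul_left_cancel₀ h2 key

lemma cov_inj (z₁ z₂ : ℂ) (h1 : z₁ ∉ intMulI) (h2 : z₂ ∉ intMulI)
    (h : fCov z₁ = fCov z₂) : ∃ n : ℤ, z₁ = z₂ + n * Complex.I := by
  have e1 := exp_ne_one_of_not_mem z₁ h1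
  have e2 := exp_ne_one_of_not_mem z₂ h2
  rw [fCov_eq z₁ e1, fCov_eq z₂ e2] at h
  have e1' : Complex.exp (2 * Real.pi * z₁) - 1 ≠ 0 := sub_ne_zero.mpr e1
  have e2' : Complex.exp (2 * Real.pi * z₂) - 1 ≠ 0 := sub_ne_zero.mpr e2
  have hexp : Complex.exp (2 * Real.pi * z₁) = Complex.exp (2 * Real.pi * z₂) := by
    field_simp at h
    linear_combination -h / 2
  rw [Complex.exp_eq_exp_iff_exists_int] at hexp
  obtain ⟨n, hn⟩ := hexp
  refine ⟨n, ?_⟩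
  have hpi : (Real.pi : ℂ) ≠ 0 := by exact_mod_cast Real.pi_ne_zero
  have h2pi : (2 * (Real.pi : ℂ)) ≠ 0 := by simp [hpi]
  have key : (2 * (Real.pi : ℂ)) * z₁ = (2 * (Real.pi : ℂ)) * (z₂ + n * Complex.I) := by
    linear_combination hn
  exact mul_left_cancel₀ h2pi key

lemma gam_not_mem (k : ℤ) (t : ℝ) (ht : t ∈ Set.Icc (0:ℝ) 1) : gam k t ∉ intMulI := by
  rintro ⟨m, hm⟩
  have hre : (gam k t).re = 0 := by
    rw [hm]; simp
  have him : (gam k t).im = (m : ℝ) := by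
    rw [hm]; simp
  rcases gam_re_eq_zero k t ht hre with h | h
  · rw [h, gam_zero] at him
    simp [Complex.add_im, Complex.div_im, Complex.mul_im] at him
    have h2 : (2*(k:ℝ) - 1) = 2*m := by linarith
    have h3 : (2*k - 1 : ℤ) = 2*m := by exact_mod_cast h2
    omega
  · rw [h, gam_one] at him
    simp [Complex.add_im, Complex.div_im, Complex.mul_im] at him
    have h2 : (2*(k:ℝ) - 3) = 2*m := by linarith
    have h3 : (2*k - 3 : ℤ) = 2*m := by exact_mod_cast h2
    omega

lemma gam_lift (k : ℤ) (t : ℝ) : fCov (gam k t) = alphaTwo t := by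
  have hE : Complex.exp (2 * Real.pi * Complex.I * t) ≠ 0 := Complex.exp_ne_zero _
  have hne : Complex.exp (2 * Real.pi * gam k t) ≠ 1 := by
    rw [exp_gam]
    intro h
    have h0 : (Complex.exp (2 * Real.pi * Complex.I * t))⁻¹ = 0 := by
      linear_combination -h / 2
    exact hE (inv_eq_zero.mp h0)
  rw [fCov_eq _ hne, exp_gam, alphaTwo]
  have hden : (1 : ℂ) - 2 * (Complex.exp (2 * Real.pi * Complex.I * t))⁻¹ - 1 ≠ 0 := by
    intro h
    have h0 : (Complex.exp (2 * Real.pi * Complex.I * t))⁻¹ = 0 := by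
      linear_combination -h / 2
    exact hE (inv_eq_zero.mp h0)
  field_simp
  ring

/-- For every `k ∈ ℤ`, the unique lift `γ` of `α₂` under `f = f₁ ∘ f₂` with initial point
`−i/2 + ik` exists, is unique, terminates at `−i/2 + i(k−1)`, has image in the closed right
half-plane, and meets the imaginary axis only at its endpoints. -/
theorem lift_of_alpha_two (k : ℤ) :
    ∃ γ : I → ℂ,
      (Continuous γ ∧ (∀ t : I, γ t ∉ intMulI) ∧
        (∀ t : I, fCov (γ t) = alphaTwo (t : ℝ)) ∧
        γ 0 = -Complex.I / 2 + Complex.I * (k : ℂ)) ∧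
      (∀ γ' : I → ℂ,
        (Continuous γ' ∧ (∀ t : I, γ' t ∉ intMulI) ∧
          (∀ t : I, fCov (γ' t) = alphaTwo (t : ℝ)) ∧
          γ' 0 = -Complex.I / 2 + Complex.I * (k : ℂ)) → γ' = γ) ∧
      γ 1 = -Complex.I / 2 + Complex.I * ((k : ℂ) - 1) ∧
      (∀ t : I, 0 ≤ (γ t).re) ∧
      (∀ t : I, (γ t).re = 0 → t = 0 ∨ t = 1) := by
  refine ⟨fun t : I => gam k t, ⟨?_, ?_, ?_, ?_⟩, ?_, ?_, ?_, ?_⟩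
  · exact (gam_cont k).comp continuous_subtype_val
  · intro t
    exact gam_not_mem k t t.2
  · intro t
    exact gam_lift k t
  · show gam k ((0 : I) : ℝ) = _
    have h0 : ((0 : I) : ℝ) = 0 := rfl
    rw [h0, gam_zero]
  · -- uniqueness
    rintro γ' ⟨hc, hnot, hlift, h0⟩
    have hd_cont : Continuous fun t : I => γ' t - gam k t :=
      hc.sub ((gam_cont k).comp continuous_subtype_val)
    have key : ∀ t : I, ∃ n : ℤ, γ' t - gam k t = n * Complex.I := by
      intro t
      obtain ⟨n, hn⟩ := cov_inj (γ' t) (gam k t) (hnot t) (gam_not_mem k t t.2)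
        (by rw [hlift t, gam_lift])
      exact ⟨n, by rw [hn]; ring⟩
    set S : Set I := {t : I | γ' t - gam k t = 0} with hS
    have hSopen : IsOpen S := by
      have hSeq : S = (fun t : I => γ' t - gam k t) ⁻¹' Metric.ball 0 1 := by
        ext t
        simp only [hS, Set.mem_setOf_eq, Set.mem_preimage, Metric.mem_ball, dist_zero_right]
        constructor
        · intro h; rw [h]; norm_num
        · intro h
          obtain ⟨n, hn⟩ := key t
          rw [hn] at h ⊢
          have hnorm : ‖(n : ℂ) * Complex.I‖ = |(n : ℝ)| := by
            rw [norm_mul, Complex.norm_I, mul_one]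
            have : ((n : ℤ) : ℂ) = (((n : ℤ) : ℝ) : ℂ) := by push_cast; ring
            rw [this, Complex.norm_real, Real.norm_eq_abs]
          rw [hnorm] at h
          have hab := abs_lt.mp h
          have hn0 : n = 0 := by
            have h1 : (-1 : ℝ) < (n : ℝ) := hab.1
            have h2 : ((n : ℝ)) < 1 := hab.2
            have h1' : (-1 : ℤ) < n := by exact_mod_cast h1
            have h2' : n < (1 : ℤ) := by exact_mod_cast h2
            omega
          rw [hn0]
          norm_num
      rw [hSeq]
      exact Metric.isOpen_ball.preimage hd_cont
    have hSclosed : IsClosed S := by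
      have hSeq : S = (fun t : I => γ' t - gam k t) ⁻¹' {0} := rfl
      rw [hSeq]
      exact isClosed_singleton.preimage hd_cont
    have hne : (0 : I) ∈ S := by
      simp only [hS, Set.mem_setOf_eq]
      show γ' 0 - gam k ((0 : I) : ℝ) = 0
      have hz : ((0 : I) : ℝ) = 0 := rfl
      rw [h0, hz, gam_zero]
      ring
    have hSuniv : S = Set.univ :=
      IsClopen.eq_univ ⟨hSclosed, hSopen⟩ ⟨0, hne⟩
    funext t
    have hmem : t ∈ S := by rw [hSuniv]; trivial
    have hz : γ' t - gam k ↑t = 0 := hmem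
    exact sub_eq_zero.mp hz
  · show gam k ((1 : I) : ℝ) = _
    have h1 : ((1 : I) : ℝ) = 1 := rfl
    rw [h1, gam_one]
  · intro t
    exact gam_re_nonneg k t
  · intro t ht
    rcases gam_re_eq_zero k t t.2 ht with h | h
    · left; exact Subtype.ext h
    · right; exact Subtype.ext h
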